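/- Let H be a nonzero complex Hilbert space and let A be a bounded linear operator on H. Then w(A)² ≤ (1/4)·‖A*A + AA*‖ + (1/2)·w(A²). -/

import Mathlib

open scoped InnerProductSpace
open ContinuousLinearMap

variable {H : Type*} [NormedAddCommGroup H] [InnerProductSpace ℂ H]
  [CompleteSpace H] [Nontrivial H]

/-- The numerical radius of a bounded linear operator. -/
noncomputable def numRad (A : H →L[ℂ] H) : ℝ :=
  ⨆ x : {x : H // ‖x‖ = 1}, ‖⟪A x.1, x.1⟫_ℂ‖

/-- The Crawford number of a bounded linear operator. -/
noncomputable def crawford (A : H →L[ℂ] H) : ℝ :=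
  ⨅ x : {x : H // ‖x‖ = 1}, ‖⟪A x.1, x.1⟫_ℂ‖

/-- The Euclidean operator radius of a pair of bounded linear operators. -/
noncomputable def euclRad (B C : H →L[ℂ] H) : ℝ :=
  ⨆ x : {x : H // ‖x‖ = 1}, Real.sqrt (‖⟪B x.1, x.1⟫_ℂ‖ ^ 2 + ‖⟪C x.1, x.1⟫_ℂ‖ ^ 2)

/-- The absolute value `|A| = (A*A)^(1/2)` of a bounded linear operator. -/
noncomputable def opAbs (A : H →L[ℂ] H) : H →L[ℂ] H := CFC.sqrt (adjoint A * A)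

/-- The real part `Re(A) = (A + A*)/2` of a bounded linear operator. -/
noncomputable def reOp (A : H →L[ℂ] H) : H →L[ℂ] H := (2 : ℂ)⁻¹ • (A + adjoint A)

/-- The imaginary part `Im(A) = (A - A*)/(2i)` of a bounded linear operator. -/
noncomputable def imOp (A : H →L[ℂ] H) : H →L[ℂ] H := (2 * Complex.I)⁻¹ • (A - adjoint A)

private lemma key_ineq (A : H →L[ℂ] H) (x : H) (hx : ‖x‖ = 1) :
    ‖⟪A x, x⟫_ℂ‖ ^ 2 ≤
      (1/4) * ‖adjoint A * A + A * adjoint A‖ + (1/2) * ‖⟪(A ^ 2) x, x⟫_ℂ‖ := by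
  set z : ℂ := ⟪A x, x⟫_ℂ with hz
  set w : ℂ := ⟪(A ^ 2) x, x⟫_ℂ with hw
  by_cases h0 : z = 0
  · rw [h0]
    norm_num
    positivity
  · set c : ℂ := z / ‖z‖ with hc
    have hnc : ‖c‖ = 1 := by
      rw [hc, norm_div, Complex.norm_real, norm_norm, div_self (norm_ne_zero_iff.mpr h0)]
    have hcc : (starRingEnd ℂ) c * c = 1 := by
      rw [mul_comm, Complex.mul_conj, Complex.normSq_eq_norm_sq, hnc]
      norm_num
    have hcz : c * (starRingEnd ℂ) z = (‖z‖ : ℂ) := by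
      rw [hc, div_mul_eq_mul_div, Complex.mul_conj, Complex.normSq_eq_norm_sq]
      push_cast
      rw [sq, mul_div_assoc, div_self (by exact_mod_cast norm_ne_zero_iff.mpr h0), mul_one]
    have hcz' : (starRingEnd ℂ) c * z = (‖z‖ : ℂ) := by
      have := congrArg (starRingEnd ℂ) hcz
      simpa using this
    set v : H := (2 : ℂ)⁻¹ • (c • A x + (starRingEnd ℂ) c • adjoint A x) with hv
    have hAd : ⟪adjoint A x, x⟫_ℂ = (starRingEnd ℂ) z := by
      rw [adjoint_inner_left, ← inner_conj_symm, hz]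
    have h2 : ⟪v, x⟫_ℂ = (‖z‖ : ℂ) := by
      rw [hv, inner_smul_left, inner_add_left, inner_smul_left, inner_smul_left, hAd, ← hz]
      simp only [map_inv₀, Complex.conj_ofNat, Complex.conj_conj]
      rw [mul_comm ((starRingEnd ℂ) c) z] at hcz'
      linear_combination (2:ℂ)⁻¹ * hcz' + (2:ℂ)⁻¹ * hcz
    have h3 : ‖z‖ ≤ ‖v‖ := by
      calc ‖z‖ = ‖⟪v, x⟫_ℂ‖ := by simp [h2]
        _ ≤ ‖v‖ * ‖x‖ := norm_inner_le_norm _ _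
        _ = ‖v‖ := by rw [hx, mul_one]
    have hAB : ⟪A x, adjoint A x⟫_ℂ = w := by
      rw [adjoint_inner_right, hw, pow_two, ContinuousLinearMap.mul_apply]
    have hBA : ⟪adjoint A x, A x⟫_ℂ = (starRingEnd ℂ) w := by
      rw [← inner_conj_symm, hAB]
    have hvv4 : (4 : ℂ) * ⟪v, v⟫_ℂ = ⟪A x, A x⟫_ℂ + ⟪adjoint A x, adjoint A x⟫_ℂ
        + ((starRingEnd ℂ) c) ^ 2 * w + (starRingEnd ℂ) (((starRingEnd ℂ) c) ^ 2 * w) := by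
      rw [hv]
      simp only [inner_smul_left, inner_smul_right, inner_add_left, inner_add_right,
        Complex.conj_conj, map_inv₀, Complex.conj_ofNat, hAB, hBA, map_mul, map_pow]
      linear_combination (⟪A x, A x⟫_ℂ + ⟪adjoint A x, adjoint A x⟫_ℂ) * hcc
    have hreV : Complex.re ⟪v, v⟫_ℂ = ‖v‖ ^ 2 := by
      simpa [RCLike.re_to_complex] using inner_self_eq_norm_sq (𝕜 := ℂ) v
    have hreA : Complex.re ⟪A x, A x⟫_ℂ = ‖A x‖ ^ 2 := by
      simpa [RCLike.re_to_complex] using inner_self_eq_norm_sq (𝕜 := ℂ) (A x)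
    have hreB : Complex.re ⟪adjoint A x, adjoint A x⟫_ℂ = ‖adjoint A x‖ ^ 2 := by
      simpa [RCLike.re_to_complex] using inner_self_eq_norm_sq (𝕜 := ℂ) (adjoint A x)
    have h4 : (4 : ℝ) * ‖v‖ ^ 2 = ‖A x‖ ^ 2 + ‖adjoint A x‖ ^ 2
        + 2 * (((starRingEnd ℂ) c) ^ 2 * w).re := by
      have e := congrArg Complex.re hvv4
      simp only [Complex.mul_re, Complex.re_ofNat, Complex.im_ofNat, Complex.add_re,
        Complex.conj_re, hreV, hreA, hreB] at e
      rw [Complex.mul_re]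
      linarith [e]
    have hS : ‖A x‖ ^ 2 + ‖adjoint A x‖ ^ 2 ≤ ‖adjoint A * A + A * adjoint A‖ := by
      have e1 : ⟪(adjoint A * A) x, x⟫_ℂ = ⟪A x, A x⟫_ℂ := by
        rw [ContinuousLinearMap.mul_apply, adjoint_inner_left]
      have e2 : ⟪(A * adjoint A) x, x⟫_ℂ = ⟪adjoint A x, adjoint A x⟫_ℂ := by
        rw [ContinuousLinearMap.mul_apply, ← adjoint_inner_right]
      have e : ⟪(adjoint A * A + A * adjoint A) x, x⟫_ℂ
          = ⟪A x, A x⟫_ℂ + ⟪adjoint A x, adjoint A x⟫_ℂ := by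
        rw [ContinuousLinearMap.add_apply, inner_add_left, e1, e2]
      calc ‖A x‖ ^ 2 + ‖adjoint A x‖ ^ 2
          = (⟪(adjoint A * A + A * adjoint A) x, x⟫_ℂ).re := by
            rw [e, Complex.add_re, hreA, hreB]
        _ ≤ ‖⟪(adjoint A * A + A * adjoint A) x, x⟫_ℂ‖ := by
            exact Complex.re_le_norm _
        _ ≤ ‖(adjoint A * A + A * adjoint A) x‖ * ‖x‖ := norm_inner_le_norm _ _
        _ ≤ ‖adjoint A * A + A * adjoint A‖ * ‖x‖ * ‖x‖ :=
            mul_le_mul_of_nonneg_right (le_opNorm _ _) (norm_nonneg _)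
        _ = ‖adjoint A * A + A * adjoint A‖ := by rw [hx]; ring
    have hwre : (((starRingEnd ℂ) c) ^ 2 * w).re ≤ ‖w‖ := by
      refine le_trans (Complex.re_le_norm _) ?_
      rw [norm_mul, norm_pow, RCLike.norm_conj, hnc]
      norm_num
    have h5 : ‖z‖ ^ 2 ≤ ‖v‖ ^ 2 := by
      have := pow_le_pow_left₀ (norm_nonneg z) h3 2
      simpa using this
    linarith [h4, h5, hS, hwre]

theorem stmt11 (A : H →L[ℂ] H) :
    (numRad A) ^ 2 ≤ (1/4) * ‖adjoint A * A + A * adjoint A‖ + (1/2) * numRad (A ^ 2) := by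
  have hne : Nonempty {x : H // ‖x‖ = 1} := by
    obtain ⟨x, hx⟩ := exists_norm_eq H (zero_le_one (α := ℝ))
    exact ⟨⟨x, hx⟩⟩
  unfold numRad
  have hbdd : BddAbove (Set.range fun x : {x : H // ‖x‖ = 1} => ‖⟪(A ^ 2) x.1, x.1⟫_ℂ‖) := by
    refine ⟨‖A ^ 2‖, ?_⟩
    rintro r ⟨x, rfl⟩
    calc ‖⟪(A ^ 2) x.1, x.1⟫_ℂ‖ ≤ ‖(A ^ 2) x.1‖ * ‖x.1‖ := norm_inner_le_norm _ _
      _ ≤ ‖A ^ 2‖ * ‖x.1‖ * ‖x.1‖ :=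
          mul_le_mul_of_nonneg_right (le_opNorm _ _) (norm_nonneg _)
      _ = ‖A ^ 2‖ := by rw [x.2]; ring
  have hr2 : (0:ℝ) ≤ ⨆ x : {x : H // ‖x‖ = 1}, ‖⟪(A ^ 2) x.1, x.1⟫_ℂ‖ :=
    Real.iSup_nonneg fun x => norm_nonneg _
  set M : ℝ := (1/4) * ‖adjoint A * A + A * adjoint A‖
      + (1/2) * ⨆ x : {x : H // ‖x‖ = 1}, ‖⟪(A ^ 2) x.1, x.1⟫_ℂ‖ with hM
  have hM0 : 0 ≤ M := by
    rw [hM]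
    have : (0:ℝ) ≤ (1/4) * ‖adjoint A * A + A * adjoint A‖ := by positivity
    linarith
  have hkey : ∀ x : {x : H // ‖x‖ = 1}, ‖⟪A x.1, x.1⟫_ℂ‖ ≤ Real.sqrt M := by
    intro x
    have h1 := key_ineq A x.1 x.2
    have h2 : ‖⟪(A ^ 2) x.1, x.1⟫_ℂ‖
        ≤ ⨆ y : {y : H // ‖y‖ = 1}, ‖⟪(A ^ 2) y.1, y.1⟫_ℂ‖ := le_ciSup hbdd x
    have h3 : ‖⟪A x.1, x.1⟫_ℂ‖ ^ 2 ≤ M := by rw [hM]; linarith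
    exact (Real.le_sqrt (norm_nonneg _) hM0).mpr h3
  have h : (⨆ x : {x : H // ‖x‖ = 1}, ‖⟪A x.1, x.1⟫_ℂ‖) ≤ Real.sqrt M := ciSup_le hkey
  have h0 : (0:ℝ) ≤ ⨆ x : {x : H // ‖x‖ = 1}, ‖⟪A x.1, x.1⟫_ℂ‖ :=
    Real.iSup_nonneg fun x => norm_nonneg _
  calc (⨆ x : {x : H // ‖x‖ = 1}, ‖⟪A x.1, x.1⟫_ℂ‖) ^ 2
      ≤ Real.sqrt M ^ 2 := pow_le_pow_left₀ h0 h 2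
    _ = M := Real.sq_sqrt hM0
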